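/- Let n ≥ 1 and let Ω : C^n∖{0} → ℂ be bounded, measurable and homogeneous of degree 0 (Ω(λz) = Ω(z) for all λ > 0 and z ≠ 0). Define the mixed kernel K(z,t) = Ω(z) |z|^{−2n} (|z|² + it)^{−1} for z ≠ 0, t ∈ ℝ. Then there is a constant C depending only on n and sup|Ω| such that for every z ≠ 0, every δ > 0 and every C¹ function φ₁ : ℝ → ℂ supported in [−1,1] with |φ₁| ≤ 1 and |φ₁'| ≤ 1: |∫_ℝ K(z,t) φ₁(δt) dt| ≤ C |z|^{−2n}. (For each fixed z ≠ 0 and δ > 0 this integral converges absolutely.) -/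

import Mathlib

open MeasureTheory Complex
open scoped ENNReal

noncomputable section

/-- The squared Euclidean norm `|z|²` of `z ∈ ℂⁿ`. -/
def eSq {n : ℕ} (z : Fin n → ℂ) : ℝ := ∑ k : Fin n, Complex.normSq (z k)

/-- The Euclidean norm `|z|` of `z ∈ ℂⁿ`. -/
def zNorm {n : ℕ} (z : Fin n → ℂ) : ℝ := Real.sqrt (eSq z)

/-- The mixed kernel `K(z,t) = Ω(z) |z|^{-2n} (|z|² + it)⁻¹`. -/
def mixedK (n : ℕ) (Ω : (Fin n → ℂ) → ℂ) (z : Fin n → ℂ) (t : ℝ) : ℂ :=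
  Ω z * (((zNorm z ^ (2*n) : ℝ) : ℂ))⁻¹ * (((eSq z : ℝ) : ℂ) + (t : ℂ) * Complex.I)⁻¹

/-- Poisson kernel integral over the line. -/
lemma poisson_integrable {a : ℝ} (ha : 0 < a) :
    Integrable (fun t : ℝ => a / (a ^ 2 + t ^ 2)) := by
  have h : (fun t : ℝ => a / (a ^ 2 + t ^ 2))
      = fun t : ℝ => a⁻¹ * (1 + (a⁻¹ * t) ^ 2)⁻¹ := by
    funext t
    have hd : a ^ 2 + t ^ 2 ≠ 0 := by positivity
    field_simp
  rw [h]
  exact (integrable_inv_one_add_sq.comp_mul_left' (inv_ne_zero ha.ne')).const_mul _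

lemma poisson_integral {a : ℝ} (ha : 0 < a) :
    ∫ t : ℝ, a / (a ^ 2 + t ^ 2) = Real.pi := by
  have h : (fun t : ℝ => a / (a ^ 2 + t ^ 2))
      = fun t : ℝ => a⁻¹ * (1 + (a⁻¹ * t) ^ 2)⁻¹ := by
    funext t
    have hd : a ^ 2 + t ^ 2 ≠ 0 := by positivity
    field_simp
  rw [h]
  rw [MeasureTheory.integral_const_mul]
  rw [MeasureTheory.Measure.integral_comp_mul_left (fun x : ℝ => (1 + x ^ 2)⁻¹) a⁻¹]
  rw [integral_univ_inv_one_add_sq]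
  rw [inv_inv, abs_of_pos ha, smul_eq_mul]
  field_simp

/-- Explicit real/imaginary decomposition of `(a + t i)⁻¹`. -/
lemma inv_decomp {a : ℝ} (ha : 0 < a) (t : ℝ) :
    ((a : ℂ) + (t : ℂ) * Complex.I)⁻¹
      = ((a / (a ^ 2 + t ^ 2) : ℝ) : ℂ) + ((-t / (a ^ 2 + t ^ 2) : ℝ) : ℂ) * Complex.I := by
  have hd : a ^ 2 + t ^ 2 ≠ 0 := by positivity
  have hdc : ((a : ℂ) ^ 2 + (t : ℂ) ^ 2) ≠ 0 := by
    have : ((a : ℂ) ^ 2 + (t : ℂ) ^ 2) = (((a ^ 2 + t ^ 2 : ℝ)) : ℂ) := by push_cast; ring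
    rw [this]
    exact_mod_cast hd
  have h1 : ((a : ℂ) + (t : ℂ) * Complex.I) *
      (((a / (a ^ 2 + t ^ 2) : ℝ) : ℂ) + ((-t / (a ^ 2 + t ^ 2) : ℝ) : ℂ) * Complex.I) = 1 := by
    push_cast
    field_simp
    ring_nf
    rw [Complex.I_sq]
    ring
  exact inv_eq_of_mul_eq_one_right h1


/-- Core cancellation estimate for the scalar kernel `(a+ti)⁻¹`. -/
lemma core_estimate {a δ : ℝ} (ha : 0 < a) (hδ : 0 < δ)
    (φ : ℝ → ℂ) (hφ : ContDiff ℝ 1 φ) (hsupp : ∀ x : ℝ, x ∉ Set.Icc (-1:ℝ) 1 → φ x = 0)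
    (hb : ∀ x, ‖φ x‖ ≤ 1) (hd : ∀ x, ‖deriv φ x‖ ≤ 1) :
    Integrable (fun t : ℝ => ((a : ℂ) + (t : ℂ) * Complex.I)⁻¹ * φ (δ * t)) volume ∧
    ‖∫ t : ℝ, ((a : ℂ) + (t : ℂ) * Complex.I)⁻¹ * φ (δ * t)‖ ≤ Real.pi + 2 := by
  set R : ℝ := δ⁻¹ with hR
  have hRpos : 0 < R := inv_pos.2 hδ
  have hne : ∀ t : ℝ, ((a : ℂ) + (t : ℂ) * Complex.I) ≠ 0 := by
    intro t h
    have h' := congrArg Complex.re h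
    simp at h'
    exact ha.ne' h'
  have hcontinv : Continuous fun t : ℝ => ((a : ℂ) + (t : ℂ) * Complex.I)⁻¹ := by
    apply Continuous.inv₀
    · fun_prop
    · exact hne
  have hφc : Continuous φ := hφ.continuous
  have hg : Continuous fun t : ℝ => ((a : ℂ) + (t : ℂ) * Complex.I)⁻¹ * φ (δ * t) :=
    hcontinv.mul (hφc.comp (continuous_const.mul continuous_id))
  have hvanish : ∀ t : ℝ, t ∉ Set.Icc (-R) R →
      ((a : ℂ) + (t : ℂ) * Complex.I)⁻¹ * φ (δ * t) = 0 := by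
    intro t ht
    have : φ (δ * t) = 0 := by
      apply hsupp
      intro hmem
      apply ht
      have hiv : δ⁻¹ * δ = 1 := inv_mul_cancel₀ hδ.ne'
      have hip : (0:ℝ) < δ⁻¹ := inv_pos.2 hδ
      constructor
      · rw [hR]
        nlinarith [mul_le_mul_of_nonneg_left hmem.1 hip.le]
      · rw [hR]
        nlinarith [mul_le_mul_of_nonneg_left hmem.2 hip.le]
    rw [this, mul_zero]
  have hcs : HasCompactSupport fun t : ℝ => ((a : ℂ) + (t : ℂ) * Complex.I)⁻¹ * φ (δ * t) := by
    apply HasCompactSupport.intro (isCompact_Icc (a := -R) (b := R))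
    exact hvanish
  have hint : Integrable (fun t : ℝ => ((a : ℂ) + (t : ℂ) * Complex.I)⁻¹ * φ (δ * t)) volume :=
    hg.integrable_of_hasCompactSupport hcs
  refine ⟨hint, ?_⟩
  rw [← MeasureTheory.setIntegral_eq_integral_of_forall_compl_eq_zero hvanish]
  set u : ℝ → ℝ := fun t => a / (a ^ 2 + t ^ 2) with hu
  set v : ℝ → ℝ := fun t => -t / (a ^ 2 + t ^ 2) with hv
  have hdne : ∀ t : ℝ, a ^ 2 + t ^ 2 ≠ 0 := fun t => by positivity
  have hucont : Continuous u := by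
    apply Continuous.div continuous_const (by fun_prop) hdne
  have hvcont : Continuous v := by
    apply Continuous.div (by fun_prop) (by fun_prop) hdne
  have hi1 : IntegrableOn (fun t : ℝ => ((a : ℂ) + (t : ℂ) * Complex.I)⁻¹ * φ 0)
      (Set.Icc (-R) R) := (hcontinv.mul continuous_const).integrableOn_Icc
  have hi2 : IntegrableOn (fun t : ℝ => ((a : ℂ) + (t : ℂ) * Complex.I)⁻¹ * (φ (δ * t) - φ 0))
      (Set.Icc (-R) R) :=
    (hcontinv.mul ((hφc.comp (continuous_const.mul continuous_id)).sub
      continuous_const)).integrableOn_Icc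
  have heq : (∫ t in Set.Icc (-R) R, ((a : ℂ) + (t : ℂ) * Complex.I)⁻¹ * φ (δ * t))
      = (∫ t in Set.Icc (-R) R, ((a : ℂ) + (t : ℂ) * Complex.I)⁻¹ * φ 0)
        + ∫ t in Set.Icc (-R) R, ((a : ℂ) + (t : ℂ) * Complex.I)⁻¹ * (φ (δ * t) - φ 0) := by
    rw [← MeasureTheory.integral_add hi1 hi2]
    congr 1
    funext t
    ring
  -- the imaginary (odd) part integrates to zero
  have hv0 : (∫ t in Set.Icc (-R) R, v t) = 0 := by
    have h1 : (∫ t in Set.Icc (-R) R, v t) = ∫ t in (-R)..R, v t := by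
      rw [intervalIntegral.integral_of_le (by linarith : -R ≤ R),
        MeasureTheory.integral_Icc_eq_integral_Ioc]
    have h2 : (∫ t in (-R)..R, v (-t)) = ∫ t in (-R)..R, v t := by
      have h := intervalIntegral.integral_comp_neg (f := v) (a := -R) (b := R)
      simpa using h
    have h3 : (∫ t in (-R)..R, v (-t)) = ∫ t in (-R)..R, -(v t) := by
      apply intervalIntegral.integral_congr
      intro x _
      simp only [hv, neg_neg]
      ring
    rw [h3, intervalIntegral.integral_neg] at h2
    rw [h1]
    linarith
  have huI : Integrable u := poisson_integrable ha
  have hu_le : (∫ t in Set.Icc (-R) R, u t) ≤ Real.pi := by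
    calc (∫ t in Set.Icc (-R) R, u t) ≤ ∫ t, u t :=
          setIntegral_le_integral huI (Filter.Eventually.of_forall fun t => by
            simp only [hu]; positivity)
      _ = Real.pi := poisson_integral ha
  have hu_nn : 0 ≤ ∫ t in Set.Icc (-R) R, u t :=
    setIntegral_nonneg measurableSet_Icc fun t _ => by simp only [hu]; positivity
  have hinv_eq : (∫ t in Set.Icc (-R) R, ((a : ℂ) + (t : ℂ) * Complex.I)⁻¹)
      = ((∫ t in Set.Icc (-R) R, u t : ℝ) : ℂ)
        + ((∫ t in Set.Icc (-R) R, v t : ℝ) : ℂ) * Complex.I := by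
    have : ∀ t : ℝ, ((a : ℂ) + (t : ℂ) * Complex.I)⁻¹
        = ((u t : ℝ) : ℂ) + ((v t : ℝ) : ℂ) * Complex.I := fun t => inv_decomp ha t
    rw [MeasureTheory.integral_congr_ae (Filter.Eventually.of_forall fun t => this t)]
    rw [MeasureTheory.integral_add]
    · have e1 : (∫ t in Set.Icc (-R) R, ((u t : ℝ) : ℂ))
          = ((∫ t in Set.Icc (-R) R, u t : ℝ) : ℂ) :=
        Complex.ofRealLI.integral_comp_comm (μ := volume.restrict (Set.Icc (-R) R)) u
      have e2 : (∫ t in Set.Icc (-R) R, ((v t : ℝ) : ℂ))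
          = ((∫ t in Set.Icc (-R) R, v t : ℝ) : ℂ) :=
        Complex.ofRealLI.integral_comp_comm (μ := volume.restrict (Set.Icc (-R) R)) v
      rw [MeasureTheory.integral_mul_const, e1, e2]
    · exact (hucont.integrableOn_Icc).ofReal
    · exact ((hvcont.integrableOn_Icc).ofReal (𝕜 := ℂ)).mul_const Complex.I
  have hA : ‖∫ t in Set.Icc (-R) R, ((a : ℂ) + (t : ℂ) * Complex.I)⁻¹ * φ 0‖ ≤ Real.pi := by
    rw [MeasureTheory.integral_mul_const, norm_mul, hinv_eq, hv0]
    have h5 : ‖(((∫ t in Set.Icc (-R) R, u t : ℝ)) : ℂ) + (((0:ℝ)) : ℂ) * Complex.I‖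
        = |∫ t in Set.Icc (-R) R, u t| := by
      simp
    rw [h5, _root_.abs_of_nonneg hu_nn]
    calc (∫ t in Set.Icc (-R) R, u t) * ‖φ 0‖ ≤ Real.pi * 1 := by
          apply mul_le_mul hu_le (hb 0) (norm_nonneg _) Real.pi_pos.le
      _ = Real.pi := mul_one _
  -- Lipschitz bound for φ
  have hlip : ∀ x y : ℝ, ‖φ x - φ y‖ ≤ 1 * ‖x - y‖ := by
    intro x y
    exact convex_univ.norm_image_sub_le_of_norm_deriv_le
      (fun w _ => (hφ.differentiable one_ne_zero).differentiableAt)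
      (fun w _ => hd w) (Set.mem_univ y) (Set.mem_univ x)
  have hB2 : ‖∫ t in Set.Icc (-R) R,
      ((a : ℂ) + (t : ℂ) * Complex.I)⁻¹ * (φ (δ * t) - φ 0)‖ ≤ 2 := by
    have hvol : volume (Set.Icc (-R) R) < ⊤ := measure_Icc_lt_top
    have hbound : ∀ t ∈ Set.Icc (-R) R,
        ‖((a : ℂ) + (t : ℂ) * Complex.I)⁻¹ * (φ (δ * t) - φ 0)‖ ≤ δ := by
      intro t _
      rcases eq_or_ne t 0 with rfl | htne
      · simp [hδ.le]
      · have h1 : ‖((a : ℂ) + (t : ℂ) * Complex.I)⁻¹‖ ≤ |t|⁻¹ := by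
          rw [norm_inv]
          apply inv_anti₀ (abs_pos.2 htne)
          calc |t| = |((a : ℂ) + (t : ℂ) * Complex.I).im| := by simp
            _ ≤ ‖(a : ℂ) + (t : ℂ) * Complex.I‖ := Complex.abs_im_le_norm _
        have h2 : ‖φ (δ * t) - φ 0‖ ≤ δ * |t| := by
          calc ‖φ (δ * t) - φ 0‖ ≤ 1 * ‖δ * t - 0‖ := hlip _ _
            _ = δ * |t| := by rw [one_mul, sub_zero, Real.norm_eq_abs, abs_mul,
                abs_of_pos hδ]
        calc ‖((a : ℂ) + (t : ℂ) * Complex.I)⁻¹ * (φ (δ * t) - φ 0)‖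
            = ‖((a : ℂ) + (t : ℂ) * Complex.I)⁻¹‖ * ‖φ (δ * t) - φ 0‖ := norm_mul _ _
          _ ≤ |t|⁻¹ * (δ * |t|) := by
              apply mul_le_mul h1 h2 (norm_nonneg _) (by positivity)
          _ = δ := by field_simp
    have hmeas : AEStronglyMeasurable
        (fun t : ℝ => ((a : ℂ) + (t : ℂ) * Complex.I)⁻¹ * (φ (δ * t) - φ 0))
        (volume.restrict (Set.Icc (-R) R)) :=
      (hcontinv.mul ((hφc.comp (continuous_const.mul continuous_id)).sub
        continuous_const)).aestronglyMeasurable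
    have h6 := norm_setIntegral_le_of_norm_le_const hvol hbound
    rw [measureReal_def, Real.volume_Icc] at h6
    have h7 : (ENNReal.ofReal (R - -R)).toReal = 2 * R := by
      rw [ENNReal.toReal_ofReal (by linarith)]
      ring
    rw [h7] at h6
    calc ‖∫ t in Set.Icc (-R) R, ((a : ℂ) + (t : ℂ) * Complex.I)⁻¹ * (φ (δ * t) - φ 0)‖
        ≤ δ * (2 * R) := h6
      _ = 2 := by rw [hR]; field_simp
  calc ‖∫ t in Set.Icc (-R) R, ((a : ℂ) + (t : ℂ) * Complex.I)⁻¹ * φ (δ * t)‖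
      = ‖(∫ t in Set.Icc (-R) R, ((a : ℂ) + (t : ℂ) * Complex.I)⁻¹ * φ 0)
        + ∫ t in Set.Icc (-R) R, ((a : ℂ) + (t : ℂ) * Complex.I)⁻¹ * (φ (δ * t) - φ 0)‖ := by
        rw [heq]
    _ ≤ ‖∫ t in Set.Icc (-R) R, ((a : ℂ) + (t : ℂ) * Complex.I)⁻¹ * φ 0‖
        + ‖∫ t in Set.Icc (-R) R, ((a : ℂ) + (t : ℂ) * Complex.I)⁻¹ * (φ (δ * t) - φ 0)‖ :=
        norm_add_le _ _
    _ ≤ Real.pi + 2 := add_le_add hA hB2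

theorem mixed_kernel_cancellation_central (n : ℕ) (hn : 1 ≤ n) (B : ℝ) :
    ∃ C : ℝ, 0 < C ∧
      ∀ Ω : (Fin n → ℂ) → ℂ, Measurable Ω → (∀ z, ‖Ω z‖ ≤ B) →
        (∀ (l : ℝ) (z : Fin n → ℂ), 0 < l → z ≠ 0 → Ω (l • z) = Ω z) →
        ∀ z : Fin n → ℂ, z ≠ 0 → ∀ δ : ℝ, 0 < δ →
        ∀ φ : ℝ → ℂ, ContDiff ℝ 1 φ → (∀ x : ℝ, x ∉ Set.Icc (-1:ℝ) 1 → φ x = 0) →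
          (∀ x, ‖φ x‖ ≤ 1) → (∀ x, ‖deriv φ x‖ ≤ 1) →
          Integrable (fun t : ℝ => mixedK n Ω z t * φ (δ * t)) volume ∧
          ‖∫ t : ℝ, mixedK n Ω z t * φ (δ * t)‖ ≤ C / zNorm z ^ (2*n) := by
  refine ⟨(|B| + 1) * (Real.pi + 2), by positivity, ?_⟩
  intro Ω hΩm hΩb hΩh z hz δ hδ φ hφ hsupp hb hd
  have hB0 : 0 ≤ B := le_trans (norm_nonneg _) (hΩb 0)
  obtain ⟨k, hk⟩ : ∃ k, z k ≠ 0 := by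
    by_contra h
    push_neg at h
    exact hz (funext h)
  have ha : 0 < eSq z :=
    Finset.sum_pos' (fun i _ => Complex.normSq_nonneg _)
      ⟨k, Finset.mem_univ k, Complex.normSq_pos.2 hk⟩
  have hr : 0 < zNorm z ^ (2 * n) := pow_pos (Real.sqrt_pos.2 ha) _
  obtain ⟨hint, hbound⟩ := core_estimate ha hδ φ hφ hsupp hb hd
  set r : ℝ := zNorm z ^ (2 * n) with hrdef
  set c : ℂ := Ω z * ((r : ℂ))⁻¹ with hc
  have hfun : (fun t : ℝ => mixedK n Ω z t * φ (δ * t))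
      = fun t : ℝ => c * ((((eSq z : ℝ) : ℂ) + (t : ℂ) * Complex.I)⁻¹ * φ (δ * t)) := by
    funext t
    simp only [mixedK, hc]
    ring
  have hnc : ‖c‖ ≤ B * r⁻¹ := by
    rw [hc, norm_mul, norm_inv, Complex.norm_real, Real.norm_eq_abs, _root_.abs_of_pos hr]
    exact mul_le_mul_of_nonneg_right (hΩb z) (by positivity)
  constructor
  · rw [hfun]
    exact hint.const_mul c
  · rw [hfun]
    rw [MeasureTheory.integral_const_mul, norm_mul]
    have h1 : ‖c‖ * ‖∫ t : ℝ, (((eSq z : ℝ) : ℂ) + (t : ℂ) * Complex.I)⁻¹ * φ (δ * t)‖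
        ≤ (B * r⁻¹) * (Real.pi + 2) := by
      apply mul_le_mul hnc hbound (norm_nonneg _) (by positivity)
    refine h1.trans ?_
    rw [div_eq_mul_inv]
    have h2 : B * (Real.pi + 2) ≤ (|B| + 1) * (Real.pi + 2) := by
      nlinarith [le_abs_self B, Real.pi_pos]
    nlinarith [inv_pos.2 hr, h2]
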